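/- Let k be a field, n ≥ 3, and t = 2m even with m ≥ 1. Set g_0 = ∏_{i=1}^n x_i^m, and for 1 ≤ k ≤ m and 1 ≤ j ≤ n set g_{k,j} = x_j^{m-k} ∏_{i≠j} x_i^{m+k} in k[x_1,…,x_n]. Order the generators as g_0 first, followed by the g_{k,j} with the pairs (k,j) in lexicographic order. Then for every generator g in this list other than g_0, the colon ideal generated by all earlier generators in the list, coloned with g, is generated by a subset of the variables {x_1,…,x_n}. -/

import Mathlib

open MvPolynomial

section Aux

variable {k : Type*} [Field k] {n : ℕ}

/-- product of monomials with coefficient 1 -/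
lemma aux_prod_monomial {ι : Type*} (s : Finset ι) (d : ι → (Fin n →₀ ℕ)) :
    ∏ i ∈ s, (monomial (d i) (1 : k)) = monomial (∑ i ∈ s, d i) (1 : k) := by
  induction s using Finset.cons_induction with
  | empty => simp
  | cons a s ha ih => simp [ih, monomial_mul]

/-- exponent vector of `g_{c',j'}` -/
noncomputable def auxD (n m c' : ℕ) (j' : Fin n) : Fin n →₀ ℕ :=
  Finsupp.single j' (m - c') + ∑ i ∈ Finset.univ.erase j', Finsupp.single i (m + c')

lemma auxD_apply (m c' : ℕ) (j' i : Fin n) :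
    auxD n m c' j' i = if i = j' then m - c' else m + c' := by
  classical
  simp only [auxD, Finsupp.add_apply, Finsupp.finset_sum_apply, Finsupp.single_apply]
  rw [Finset.sum_ite_eq' (Finset.univ.erase j') i (fun _ => m + c')]
  rcases eq_or_ne i j' with h | h
  · simp [h]
  · simp [Ne.symm h, h, Finset.mem_erase.mpr ⟨h, Finset.mem_univ i⟩]

lemma auxD_eq (m c' : ℕ) (j' : Fin n) :
    X j' ^ (m - c') * ∏ i ∈ Finset.univ.erase j', X i ^ (m + c')
      = monomial (auxD n m c' j') (1 : k) := by
  rw [show (∏ i ∈ Finset.univ.erase j', (X i : MvPolynomial (Fin n) k) ^ (m + c'))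
      = ∏ i ∈ Finset.univ.erase j', monomial (Finsupp.single i (m + c')) (1 : k) by
    refine Finset.prod_congr rfl fun i _ => ?_
    rw [X_pow_eq_monomial],
    aux_prod_monomial, X_pow_eq_monomial, monomial_mul, one_mul, auxD]

/-- exponent vector of `g_0` -/
noncomputable def auxD0 (n m : ℕ) : Fin n →₀ ℕ :=
  ∑ i : Fin n, Finsupp.single i m

lemma auxD0_apply (m : ℕ) (i : Fin n) : auxD0 n m i = m := by
  classical
  simp only [auxD0, Finsupp.finset_sum_apply, Finsupp.single_apply]
  rw [Finset.sum_ite_eq' Finset.univ i (fun _ => m)]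
  simp

lemma auxD0_eq (m : ℕ) :
    (∏ i : Fin n, (X i : MvPolynomial (Fin n) k) ^ m) = monomial (auxD0 n m) (1 : k) := by
  rw [show (∏ i : Fin n, (X i : MvPolynomial (Fin n) k) ^ m)
      = ∏ i : Fin n, monomial (Finsupp.single i m) (1 : k) by
    refine Finset.prod_congr rfl fun i _ => ?_
    rw [X_pow_eq_monomial],
    aux_prod_monomial, auxD0]

end Aux

/-- For `n ≥ 3` and even `t = 2m` with `m ≥ 1`, order the generators as
`g_0 = ∏_i x_i^m` first, followed by `g_{k,j} = x_j^{m-k} ∏_{i≠j} x_i^{m+k}`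
(`1 ≤ k ≤ m`, `1 ≤ j ≤ n`) in lexicographic order of `(k,j)`. Then for every
generator `g_{k,j}` (i.e. every generator other than `g_0`), the ideal of all
earlier generators coloned with `g_{k,j}` is generated by a subset of the variables. -/
theorem complete_graph_even_linear_quotients_colon (k : Type*) [Field k] (n m : ℕ)
    (hn : 3 ≤ n) (hm : 1 ≤ m) (c : ℕ) (j : Fin n) (hc1 : 1 ≤ c) (hc2 : c ≤ m) :
    ∃ S : Set (Fin n),
      Submodule.colon
          (Ideal.span ({∏ i, X i ^ m} ∪
            {g : MvPolynomial (Fin n) k |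
              ∃ (c' : ℕ) (j' : Fin n), 1 ≤ c' ∧ c' ≤ m ∧ (c' < c ∨ (c' = c ∧ j' < j)) ∧
                g = X j' ^ (m - c') * ∏ i ∈ Finset.univ.erase j', X i ^ (m + c')}))
          ((Ideal.span {X j ^ (m - c) * ∏ i ∈ Finset.univ.erase j, X i ^ (m + c)} : Ideal (MvPolynomial (Fin n) k)) : Set (MvPolynomial (Fin n) k)) =
      Ideal.span (X '' S) := by
  classical
  refine ⟨{j}, ?_⟩
  -- the set of exponent vectors of earlier generators
  set Sprev : Set (Fin n →₀ ℕ) :=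
    {auxD0 n m} ∪ {s | ∃ (c' : ℕ) (j' : Fin n), 1 ≤ c' ∧ c' ≤ m ∧
        (c' < c ∨ (c' = c ∧ j' < j)) ∧ s = auxD n m c' j'} with hSprev
  have hgens : ({∏ i, X i ^ m} ∪
      {g : MvPolynomial (Fin n) k |
        ∃ (c' : ℕ) (j' : Fin n), 1 ≤ c' ∧ c' ≤ m ∧ (c' < c ∨ (c' = c ∧ j' < j)) ∧
          g = X j' ^ (m - c') * ∏ i ∈ Finset.univ.erase j', X i ^ (m + c')})
      = (fun s => monomial s (1 : k)) '' Sprev := by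
    rw [hSprev, Set.image_union, Set.image_singleton, auxD0_eq]
    congr 1
    ext g
    constructor
    · rintro ⟨c', j', h1, h2, h3, rfl⟩
      exact ⟨auxD n m c' j', ⟨c', j', h1, h2, h3, rfl⟩, (auxD_eq m c' j').symm⟩
    · rintro ⟨s, ⟨c', j', h1, h2, h3, rfl⟩, rfl⟩
      exact ⟨c', j', h1, h2, h3, (auxD_eq m c' j').symm⟩
  ext f
  rw [hgens, auxD_eq, ← single_eq_monomial, Ideal.mem_colon_span_singleton,
    single_eq_monomial, mem_ideal_span_monomial_image, mem_ideal_span_X_image]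
  -- support of f * monomial
  have hsupp : (f * monomial (auxD n m c j) (1 : k)).support
      = f.support.map (addRightEmbedding (auxD n m c j)) := by
    rw [← single_eq_monomial]
    exact AddMonoidAlgebra.support_coeff_mul_single f 1 (fun y => by simp) _
  rw [hsupp]
  simp only [Finset.mem_map, addRightEmbedding_apply]
  constructor
  · -- colon membership implies every support monomial divisible by x_j
    intro H e he
    obtain ⟨s, hs, hle⟩ := H (e + auxD n m c j) ⟨e, he, rfl⟩
    refine ⟨j, rfl, ?_⟩
    have hj := hle j
    rw [Finsupp.add_apply, auxD_apply, if_pos rfl] at hj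
    rcases hs with hs | ⟨c', j', h1, h2, h3, rfl⟩
    · rw [hs, auxD0_apply] at hj
      omega
    · rw [auxD_apply] at hj
      rcases eq_or_ne j j' with hj' | hj'
      · rw [if_pos hj'] at hj
        subst hj'
        have hc' : c' < c := by
          rcases h3 with h3 | ⟨_, h3⟩
          · exact h3
          · exact absurd h3 (lt_irrefl j)
        omega
      · rw [if_neg hj'] at hj
        omega
  · -- conversely
    intro H
    rintro e ⟨e', he', rfl⟩
    obtain ⟨i, hi, hine⟩ := H e' he'
    rcases hi
    have h1 : 1 ≤ e' j := Nat.one_le_iff_ne_zero.mpr hine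
    rcases eq_or_lt_of_le hc1 with hc | hc
    · -- c = 1 : use g_0
      refine ⟨auxD0 n m, Or.inl rfl, fun i => ?_⟩
      rw [auxD0_apply, Finsupp.add_apply, auxD_apply]
      rcases eq_or_ne i j with rfl | hij
      · rw [if_pos rfl]; omega
      · rw [if_neg hij]; omega
    · -- c ≥ 2 : use g_{c-1, j}
      refine ⟨auxD n m (c - 1) j, Or.inr ⟨c - 1, j, by omega, by omega, Or.inl (by omega), rfl⟩,
        fun i => ?_⟩
      rw [Finsupp.add_apply, auxD_apply, auxD_apply]
      rcases eq_or_ne i j with rfl | hij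
      · rw [if_pos rfl, if_pos rfl]; omega
      · rw [if_neg hij, if_neg hij]; omega
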